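/- Let (S,K,I) be a split graph with ⋃_{v∈I} N_S(v) = K, |K| equal to the clique number of S, and |I| equal to the independence number of S with |I| ≥ 2. Suppose σ_{uv}(S) = 1 for all distinct u,v ∈ I (i.e., Φ(S) is simple and complete), and let U be the set of universal vertices of S. Then all vertices of I have a common degree d in S with 1 ≤ d ≤ |K| − 1, |U| ∈ {d − 1, d + 1 − |I|}, and |K| = |I| + |U| (in particular |K| ≥ |I|). Moreover, |U| = d − 1 iff |K| = |I| + d − 1, and |U| = d + 1 − |I| iff |K| = d + 1. -/

import Mathlib

open SimpleGraph

/-- `T` is a 4-element vertex subset of `S` whose induced subgraph is a path on 4 vertices. -/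
def IsInducedP4 {V : Type*} (S : SimpleGraph V) (T : Finset V) : Prop :=
  T.card = 4 ∧ Nonempty (S.induce (T : Set V) ≃g pathGraph 4)

/-- `σ_{uv}(S)`: the number of induced `P4`'s of `S` containing both `u` and `v`. -/
noncomputable def sigmaP4 {V : Type*} (S : SimpleGraph V) (u v : V) : ℕ :=
  Nat.card {T : Finset V // IsInducedP4 S T ∧ u ∈ T ∧ v ∈ T}

set_option linter.unusedSectionVars false
set_option maxHeartbeats 1000000

-- helper: equal cards
lemma card_eq_of_diffs {α : Type*} [DecidableEq α] {A B : Finset α}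
    (h1 : (A \ B).card = 1) (h2 : (B \ A).card = 1) : A.card = B.card := by
  have := Finset.card_sdiff_add_card_inter A B
  have := Finset.card_sdiff_add_card_inter B A
  rw [Finset.inter_comm] at this
  omega

lemma sdiff_eq_singleton {α : Type*} [DecidableEq α] {A B : Finset α} {x : α}
    (h1 : (A \ B).card = 1) (hx : x ∈ A \ B) : A \ B = {x} := by
  obtain ⟨z, hz⟩ := Finset.card_eq_one.mp h1
  rw [hz] at hx ⊢
  simp_all

lemma star_or_costar {α : Type*} [DecidableEq α] (I : Finset α) (N : α → Finset α)
    (hcard : 2 ≤ I.card)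
    (hdiff : ∀ u ∈ I, ∀ v ∈ I, u ≠ v → (N u \ N v).card = 1) :
    (∃ C : Finset α, ∀ u ∈ I, ∃ x, x ∉ C ∧ N u = insert x C) ∨
    (∃ W : Finset α, ∀ u ∈ I, ∃ y ∈ W, N u = W.erase y) := by
  induction I using Finset.induction_on with
  | empty => simp at hcard
  | @insert a s ha ih =>
    have hcards : (insert a s).card = s.card + 1 := Finset.card_insert_of_notMem ha
    -- all card-diff facts on insert a s available through hdiff
    have hane : ∀ u ∈ s, a ≠ u := fun u hu h => ha (h ▸ hu)
    rcases (by omega : s.card = 1 ∨ 2 ≤ s.card) with hs1 | hs2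
    · -- base: two elements
      obtain ⟨b, rfl⟩ := Finset.card_eq_one.mp hs1
      have hab : a ≠ b := hane b (by simp)
      have hma : a ∈ insert a ({b} : Finset α) := by simp
      have hmb : b ∈ insert a ({b} : Finset α) := by simp
      obtain ⟨x, hx⟩ := Finset.card_eq_one.mp (hdiff a hma b hmb hab)
      obtain ⟨y, hy⟩ := Finset.card_eq_one.mp (hdiff b hmb a hma hab.symm)
      left
      refine ⟨N a ∩ N b, ?_⟩
      intro u hu
      rcases Finset.mem_insert.mp hu with rfl | hu
      · refine ⟨x, ?_, ?_⟩
        · have : x ∈ N u \ N b := hx ▸ Finset.mem_singleton_self x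
          simp [Finset.mem_inter, (Finset.mem_sdiff.mp this).2]
        · conv_lhs => rw [← Finset.sdiff_union_inter (N u) (N b), hx]
          exact (Finset.insert_eq _ _).symm
      · rcases Finset.mem_singleton.mp hu with rfl
        refine ⟨y, ?_, ?_⟩
        · have : y ∈ N u \ N a := hy ▸ Finset.mem_singleton_self y
          simp [Finset.mem_inter, (Finset.mem_sdiff.mp this).2]
        · rw [Finset.inter_comm]
          conv_lhs => rw [← Finset.sdiff_union_inter (N u) (N a), hy]
          exact (Finset.insert_eq _ _).symm
    · -- inductive step
      have hdiffs : ∀ u ∈ s, ∀ v ∈ s, u ≠ v → (N u \ N v).card = 1 := fun u hu v hv h =>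
        hdiff u (Finset.mem_insert_of_mem hu) v (Finset.mem_insert_of_mem hv) h
      have hmema : a ∈ insert a s := Finset.mem_insert_self a s
      obtain ⟨u0, hu0, v0, hv0, huv0⟩ := Finset.one_lt_card.mp hs2
      have hu0' : u0 ∈ insert a s := Finset.mem_insert_of_mem hu0
      have hv0' : v0 ∈ insert a s := Finset.mem_insert_of_mem hv0
      have hcd : ∀ u ∈ insert a s, ∀ v ∈ insert a s, (N u).card = (N v).card := by
        intro u hu v hv
        by_cases h : u = v
        · rw [h]
        · exact card_eq_of_diffs (hdiff u hu v hv h) (hdiff v hv u hu (Ne.symm h))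
      have hNne : ∀ u ∈ insert a s, ∀ v ∈ insert a s, u ≠ v → N u ≠ N v := by
        intro u hu v hv h heq
        have := hdiff u hu v hv h
        rw [heq, Finset.sdiff_self] at this
        simp at this
      rcases ih hs2 hdiffs with ⟨C, hC⟩ | ⟨W, hW⟩
      · -- star on s
        obtain ⟨x0, hx0C, hNu0⟩ := hC u0 hu0
        obtain ⟨x1, hx1C, hNv0⟩ := hC v0 hv0
        have hx01 : x0 ≠ x1 := by
          intro h
          exact hNne u0 hu0' v0 hv0' huv0 (by rw [hNu0, hNv0, h])
        by_cases hCa : C ⊆ N a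
        · left
          refine ⟨C, ?_⟩
          intro u hu
          rcases Finset.mem_insert.mp hu with rfl | hu
          · have hcard2 : (N u).card = C.card + 1 := by
              rw [hcd u hu u0 hu0', hNu0, Finset.card_insert_of_notMem hx0C]
            have h1 : (N u \ C).card = 1 := by
              rw [Finset.card_sdiff_of_subset hCa]; omega
            obtain ⟨x, hx⟩ := Finset.card_eq_one.mp h1
            refine ⟨x, ?_, ?_⟩
            · have : x ∈ N u \ C := hx ▸ Finset.mem_singleton_self x
              exact (Finset.mem_sdiff.mp this).2
            · conv_lhs => rw [← Finset.sdiff_union_inter (N u) C, hx]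
              rw [Finset.inter_eq_right.mpr hCa, ← Finset.insert_eq]
          · exact hC u hu
        · obtain ⟨c, hcC, hcNa⟩ := Finset.not_subset.mp hCa
          have hkey : ∀ u ∈ s, N u \ N a = {c} := by
            intro u hu
            obtain ⟨xu, hxuC, hNu⟩ := hC u hu
            have hc : c ∈ N u \ N a := by
              rw [hNu]; exact Finset.mem_sdiff.mpr ⟨Finset.mem_insert_of_mem hcC, hcNa⟩
            exact sdiff_eq_singleton (hdiff u (Finset.mem_insert_of_mem hu) a hmema (hane u hu).symm) hc
          have hsub : ∀ u ∈ s, ∀ z ∈ N u, z ≠ c → z ∈ N a := by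
            intro u hu z hz hzc
            by_contra h
            have hmem : z ∈ N u \ N a := Finset.mem_sdiff.mpr ⟨hz, h⟩
            rw [hkey u hu] at hmem
            exact hzc (Finset.mem_singleton.mp hmem)
          -- petals of u0, v0 and core-minus-c sit inside N a
          have hx0Nu0 : x0 ∈ N u0 := by rw [hNu0]; exact Finset.mem_insert_self _ _
          have hx1Nv0 : x1 ∈ N v0 := by rw [hNv0]; exact Finset.mem_insert_self _ _
          have hx0a : x0 ∈ N a := hsub u0 hu0 x0 hx0Nu0 (fun h => hx0C (h ▸ hcC))
          have hx1a : x1 ∈ N a := hsub v0 hv0 x1 hx1Nv0 (fun h => hx1C (h ▸ hcC))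
          have hCea : C.erase c ⊆ N a := by
            intro z hz
            exact hsub u0 hu0 z
              (by rw [hNu0]; exact Finset.mem_insert_of_mem (Finset.mem_of_mem_erase hz))
              (Finset.ne_of_mem_erase hz)
          have hNacard : (N a).card = C.card + 1 := by
            rw [hcd a hmema u0 hu0', hNu0, Finset.card_insert_of_notMem hx0C]
          have hCpos : 0 < C.card := Finset.card_pos.mpr ⟨c, hcC⟩
          have hs2' : s.card = 2 := by
            by_contra hne3
            have h3 : 3 ≤ s.card := by omega
            obtain ⟨w0, hw0, hw0u, hw0v⟩ : ∃ w0 ∈ s, w0 ≠ u0 ∧ w0 ≠ v0 := by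
              have hne : ((s.erase u0).erase v0).Nonempty := by
                rw [← Finset.card_pos,
                  Finset.card_erase_of_mem (Finset.mem_erase.mpr ⟨huv0.symm, hv0⟩),
                  Finset.card_erase_of_mem hu0]
                omega
              obtain ⟨w0, hw0⟩ := hne
              exact ⟨w0, Finset.mem_of_mem_erase (Finset.mem_of_mem_erase hw0),
                (Finset.mem_erase.mp (Finset.mem_of_mem_erase hw0)).1,
                (Finset.mem_erase.mp hw0).1⟩
            obtain ⟨x2, hx2C, hNw0⟩ := hC w0 hw0
            have hw0' : w0 ∈ insert a s := Finset.mem_insert_of_mem hw0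
            have hx2a : x2 ∈ N a := hsub w0 hw0 x2
              (by rw [hNw0]; exact Finset.mem_insert_self _ _) (fun h => hx2C (h ▸ hcC))
            have hx02 : x0 ≠ x2 := fun h =>
              hNne u0 hu0' w0 hw0' hw0u.symm (by rw [hNu0, hNw0, h])
            have hx12 : x1 ≠ x2 := fun h =>
              hNne v0 hv0' w0 hw0' hw0v.symm (by rw [hNv0, hNw0, h])
            have hx2ni : x2 ∉ C.erase c := fun h => hx2C (Finset.mem_of_mem_erase h)
            have hx1ni : x1 ∉ insert x2 (C.erase c) := by
              simp only [Finset.mem_insert]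
              push_neg
              exact ⟨hx12, fun h => hx1C (Finset.mem_of_mem_erase h)⟩
            have hx0ni : x0 ∉ insert x1 (insert x2 (C.erase c)) := by
              simp only [Finset.mem_insert]
              push_neg
              exact ⟨hx01, hx02, fun h => hx0C (Finset.mem_of_mem_erase h)⟩
            have hbig : insert x0 (insert x1 (insert x2 (C.erase c))) ⊆ N a := by
              intro z hz
              rcases Finset.mem_insert.mp hz with rfl | hz
              · exact hx0a
              rcases Finset.mem_insert.mp hz with rfl | hz
              · exact hx1a
              rcases Finset.mem_insert.mp hz with rfl | hz
              · exact hx2a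
              · exact hCea hz
            have hbigcard : (insert x0 (insert x1 (insert x2 (C.erase c)))).card
                = C.card - 1 + 3 := by
              rw [Finset.card_insert_of_notMem hx0ni, Finset.card_insert_of_notMem hx1ni,
                Finset.card_insert_of_notMem hx2ni, Finset.card_erase_of_mem hcC]
            have := Finset.card_le_card hbig
            omega
          have hseq : s = {u0, v0} := by
            refine (Finset.eq_of_subset_of_card_le ?_ ?_).symm
            · intro z hz
              rcases Finset.mem_insert.mp hz with rfl | hz
              · exact hu0
              · exact (Finset.mem_singleton.mp hz) ▸ hv0
            · rw [Finset.card_insert_of_notMem (by simp [huv0]), Finset.card_singleton]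
              omega
          have hx1ni : x1 ∉ C.erase c := fun h => hx1C (Finset.mem_of_mem_erase h)
          have hx0ni : x0 ∉ insert x1 (C.erase c) := by
            simp only [Finset.mem_insert]
            push_neg
            exact ⟨hx01, fun h => hx0C (Finset.mem_of_mem_erase h)⟩
          have hNa : N a = insert x0 (insert x1 (C.erase c)) := by
            refine (Finset.eq_of_subset_of_card_le ?_ ?_).symm
            · intro z hz
              rcases Finset.mem_insert.mp hz with rfl | hz
              · exact hx0a
              rcases Finset.mem_insert.mp hz with rfl | hz
              · exact hx1a
              · exact hCea hz
            · rw [Finset.card_insert_of_notMem hx0ni, Finset.card_insert_of_notMem hx1ni,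
                Finset.card_erase_of_mem hcC]
              omega
          right
          refine ⟨insert x0 (insert x1 C), ?_⟩
          have ncx0 : c ≠ x0 := fun h => hx0C (h ▸ hcC)
          have ncx1 : c ≠ x1 := fun h => hx1C (h ▸ hcC)
          intro u hu
          rcases Finset.mem_insert.mp hu with rfl | hu
          · refine ⟨c, by simp [hcC], ?_⟩
            rw [hNa, Finset.erase_insert_of_ne ncx0.symm, Finset.erase_insert_of_ne ncx1.symm]
          · rw [hseq] at hu
            rcases Finset.mem_insert.mp hu with rfl | hu
            · refine ⟨x1, by simp, ?_⟩
              rw [hNu0, Finset.erase_insert_of_ne hx01, Finset.erase_insert hx1C]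
            · rcases Finset.mem_singleton.mp hu with rfl
              refine ⟨x0, by simp, ?_⟩
              rw [hNv0, Finset.erase_insert (by
                simp only [Finset.mem_insert]
                push_neg
                exact ⟨hx01, hx0C⟩)]
      · -- costar on s
        obtain ⟨y0, hy0W, hNu0⟩ := hW u0 hu0
        obtain ⟨y1, hy1W, hNv0⟩ := hW v0 hv0
        have hy01 : y0 ≠ y1 := fun h => hNne u0 hu0' v0 hv0' huv0 (by rw [hNu0, hNv0, h])
        have hWpos : 2 ≤ W.card := Finset.one_lt_card.mpr ⟨y0, hy0W, y1, hy1W, hy01⟩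
        by_cases hNaW : N a ⊆ W
        · right
          refine ⟨W, ?_⟩
          intro u hu
          rcases Finset.mem_insert.mp hu with rfl | hu
          · have hcW : (N u).card = W.card - 1 := by
              rw [hcd u hu u0 hu0', hNu0, Finset.card_erase_of_mem hy0W]
            have h1 : (W \ N u).card = 1 := by
              rw [Finset.card_sdiff_of_subset hNaW]
              omega
            obtain ⟨y, hy⟩ := Finset.card_eq_one.mp h1
            have hyW : y ∈ W := by
              have : y ∈ W \ N u := hy ▸ Finset.mem_singleton_self y
              exact (Finset.mem_sdiff.mp this).1
            refine ⟨y, hyW, ?_⟩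
            have hss := sdiff_sdiff_eq_self (show N u ≤ W from hNaW)
            rw [hy, Finset.sdiff_singleton_eq_erase] at hss
            exact hss.symm
          · exact hW u hu
        · obtain ⟨x, hxNa, hxW⟩ := Finset.not_subset.mp hNaW
          have hkey : ∀ u ∈ s, N a \ N u = {x} := by
            intro u hu
            obtain ⟨yu, hyuW, hNu⟩ := hW u hu
            have hmem : x ∈ N a \ N u := Finset.mem_sdiff.mpr
              ⟨hxNa, fun h => hxW (by rw [hNu] at h; exact Finset.mem_of_mem_erase h)⟩
            exact sdiff_eq_singleton
              (hdiff a hmema u (Finset.mem_insert_of_mem hu) (hane u hu)) hmem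
          have hsub : ∀ u ∈ s, (N a).erase x ⊆ N u := by
            intro u hu z hz
            by_contra h
            have hmem : z ∈ N a \ N u := Finset.mem_sdiff.mpr ⟨Finset.mem_of_mem_erase hz, h⟩
            rw [hkey u hu] at hmem
            exact (Finset.mem_erase.mp hz).1 (Finset.mem_singleton.mp hmem)
          have hNacard : (N a).card = W.card - 1 := by
            rw [hcd a hmema u0 hu0', hNu0, Finset.card_erase_of_mem hy0W]
          have hy1e : y1 ∈ W.erase y0 := Finset.mem_erase.mpr ⟨hy01.symm, hy1W⟩
          have hs2' : s.card = 2 := by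
            by_contra hne3
            have h3 : 3 ≤ s.card := by omega
            obtain ⟨w0, hw0, hw0u, hw0v⟩ : ∃ w0 ∈ s, w0 ≠ u0 ∧ w0 ≠ v0 := by
              have hne : ((s.erase u0).erase v0).Nonempty := by
                rw [← Finset.card_pos,
                  Finset.card_erase_of_mem (Finset.mem_erase.mpr ⟨huv0.symm, hv0⟩),
                  Finset.card_erase_of_mem hu0]
                omega
              obtain ⟨w0, hw0⟩ := hne
              exact ⟨w0, Finset.mem_of_mem_erase (Finset.mem_of_mem_erase hw0),
                (Finset.mem_erase.mp (Finset.mem_of_mem_erase hw0)).1,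
                (Finset.mem_erase.mp hw0).1⟩
            obtain ⟨y2, hy2W, hNw0⟩ := hW w0 hw0
            have hw0' : w0 ∈ insert a s := Finset.mem_insert_of_mem hw0
            have hy02 : y0 ≠ y2 := fun h =>
              hNne u0 hu0' w0 hw0' hw0u.symm (by rw [hNu0, hNw0, h])
            have hy12 : y1 ≠ y2 := fun h =>
              hNne v0 hv0' w0 hw0' hw0v.symm (by rw [hNv0, hNw0, h])
            have hsub3 : (N a).erase x ⊆ ((W.erase y0).erase y1).erase y2 := by
              intro z hz
              have h0 := hsub u0 hu0 hz
              have h1 := hsub v0 hv0 hz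
              have h2 := hsub w0 hw0 hz
              rw [hNu0] at h0
              rw [hNv0] at h1
              rw [hNw0] at h2
              simp only [Finset.mem_erase] at h0 h1 h2 ⊢
              exact ⟨h2.1, h1.1, h0⟩
            have hW3 : 3 ≤ W.card := by
              have hsub' : {y0, y1, y2} ⊆ W := by
                intro z hz
                rcases Finset.mem_insert.mp hz with rfl | hz
                · exact hy0W
                rcases Finset.mem_insert.mp hz with rfl | hz
                · exact hy1W
                · exact (Finset.mem_singleton.mp hz) ▸ hy2W
              have hc3 : ({y0, y1, y2} : Finset α).card = 3 := by
                rw [Finset.card_insert_of_notMem (by simp [hy01, hy02]),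
                  Finset.card_insert_of_notMem (by simp [hy12]), Finset.card_singleton]
              have := Finset.card_le_card hsub'
              omega
            have hc1 : ((N a).erase x).card = W.card - 2 := by
              rw [Finset.card_erase_of_mem hxNa]; omega
            have hc2 : (((W.erase y0).erase y1).erase y2).card = W.card - 3 := by
              rw [Finset.card_erase_of_mem (Finset.mem_erase.mpr
                  ⟨hy12.symm, Finset.mem_erase.mpr ⟨hy02.symm, hy2W⟩⟩),
                Finset.card_erase_of_mem hy1e, Finset.card_erase_of_mem hy0W]
              omega
            have := Finset.card_le_card hsub3
            omega
          have hseq : s = {u0, v0} := by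
            refine (Finset.eq_of_subset_of_card_le ?_ ?_).symm
            · intro z hz
              rcases Finset.mem_insert.mp hz with rfl | hz
              · exact hu0
              · exact (Finset.mem_singleton.mp hz) ▸ hv0
            · rw [Finset.card_insert_of_notMem (by simp [huv0]), Finset.card_singleton]
              omega
          have hEq : (N a).erase x = (W.erase y0).erase y1 := by
            refine Finset.eq_of_subset_of_card_le ?_ ?_
            · intro z hz
              have h0 := hsub u0 hu0 hz
              have h1 := hsub v0 hv0 hz
              rw [hNu0] at h0
              rw [hNv0] at h1
              simp only [Finset.mem_erase] at h0 h1 ⊢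
              exact ⟨h1.1, h0⟩
            · rw [Finset.card_erase_of_mem hy1e, Finset.card_erase_of_mem hy0W,
                Finset.card_erase_of_mem hxNa]
              omega
          left
          refine ⟨(W.erase y0).erase y1, ?_⟩
          intro u hu
          rcases Finset.mem_insert.mp hu with rfl | hu
          · refine ⟨x, fun h => hxW (Finset.mem_of_mem_erase (Finset.mem_of_mem_erase h)), ?_⟩
            rw [← hEq, Finset.insert_erase hxNa]
          · rw [hseq] at hu
            rcases Finset.mem_insert.mp hu with rfl | hu
            · refine ⟨y1, Finset.notMem_erase _ _, ?_⟩
              rw [hNu0, Finset.insert_erase hy1e]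
            · rcases Finset.mem_singleton.mp hu with rfl
              refine ⟨y0, fun h =>
                (Finset.notMem_erase y0 W) (Finset.mem_of_mem_erase h), ?_⟩
              have hcomm : (W.erase y1).erase y0 = (W.erase y0).erase y1 := by
                ext z; simp only [Finset.mem_erase]; tauto
              rw [hNv0, ← hcomm, Finset.insert_erase
                (Finset.mem_erase.mpr ⟨hy01, hy0W⟩)]

lemma isInducedP4_mk {V : Type*} [DecidableEq V] (S : SimpleGraph V) {u b c v : V}
    (hub : S.Adj u b) (hbc : S.Adj b c) (hcv : S.Adj c v)
    (huc : ¬S.Adj u c) (huv : ¬S.Adj u v) (hbv : ¬S.Adj b v)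
    (nuc : u ≠ c) (nuv : u ≠ v) (nbv : b ≠ v) :
    IsInducedP4 S {u, b, c, v} := by
  have nub : u ≠ b := hub.ne
  have nbc : b ≠ c := hbc.ne
  have ncv : c ≠ v := hcv.ne
  have hbu : S.Adj b u := hub.symm
  have hcb : S.Adj c b := hbc.symm
  have hvc : S.Adj v c := hcv.symm
  have hcu : ¬S.Adj c u := fun h => huc h.symm
  have hvu : ¬S.Adj v u := fun h => huv h.symm
  have hvb : ¬S.Adj v b := fun h => hbv h.symm
  constructor
  · rw [Finset.card_insert_of_notMem (by simp [nub, nuc, nuv]),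
      Finset.card_insert_of_notMem (by simp [nbc, nbv]),
      Finset.card_insert_of_notMem (by simp [ncv]), Finset.card_singleton]
  · set T : Finset V := {u, b, c, v} with hT
    have memu : u ∈ (T : Set V) := by simp [hT]
    have memb : b ∈ (T : Set V) := by simp [hT]
    have memc : c ∈ (T : Set V) := by simp [hT]
    have memv : v ∈ (T : Set V) := by simp [hT]
    have mem_iff : ∀ x ∈ (T : Set V), x = u ∨ x = b ∨ x = c ∨ x = v := by
      intro x hx; simpa [hT] using hx
    refine ⟨⟨⟨fun x => if (x : V) = u then 0 else if (x : V) = b then 1 else if (x : V) = c then 2 else 3,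
      fun i => if i = 0 then ⟨u, memu⟩ else if i = 1 then ⟨b, memb⟩ else if i = 2 then ⟨c, memc⟩ else ⟨v, memv⟩,
      ?_, ?_⟩, ?_⟩⟩
    · rintro ⟨x, hx⟩
      rcases mem_iff x hx with rfl | rfl | rfl | rfl <;>
        simp [nub, nuc, nuv, nbc, nbv, ncv, nub.symm, nuc.symm, nbc.symm, nuv.symm, nbv.symm, ncv.symm]
    · intro i
      fin_cases i <;>
        simp [nub, nuc, nuv, nbc, nbv, ncv, nub.symm, nuc.symm, nbc.symm, nuv.symm, nbv.symm, ncv.symm]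
    · rintro ⟨x, hx⟩ ⟨y, hy⟩
      simp only [Equiv.coe_fn_mk, comap_adj, Function.Embedding.coe_subtype]
      rcases mem_iff x hx with rfl | rfl | rfl | rfl <;>
        rcases mem_iff y hy with rfl | rfl | rfl | rfl <;>
        simp only [if_pos rfl, if_neg, pathGraph_adj,
          nub, nuc, nuv, nbc, nbv, ncv, nub.symm, nuc.symm, nbc.symm,
          nuv.symm, nbv.symm, ncv.symm, ne_eq, not_false_eq_true] <;>
        first
          | exact iff_of_true (by decide) (by assumption)
          | exact iff_of_false (by decide) (by first | assumption | exact S.loopless.irrefl _)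

section facts
variable {V : Type*} [DecidableEq V] {S : SimpleGraph V} {T : Finset V}

lemma p4_adj_iff (e : S.induce (T : Set V) ≃g pathGraph 4) (a b : (T : Set V)) :
    S.Adj a b ↔ (pathGraph 4).Adj (e a) (e b) := by
  rw [e.map_rel_iff]
  rfl

lemma p4_exists_adj (hT : IsInducedP4 S T) : ∀ x ∈ T, ∃ y ∈ T, S.Adj x y := by
  obtain ⟨-, ⟨e⟩⟩ := hT
  intro x hx
  have hx' : x ∈ (T : Set V) := hx
  have hpath : ∀ i : Fin 4, ∃ j, (pathGraph 4).Adj i j := by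
    simp only [pathGraph_adj]; decide
  obtain ⟨j, hj⟩ := hpath (e ⟨x, hx'⟩)
  refine ⟨(e.symm j : (T : Set V)), (e.symm j).2, ?_⟩
  exact (p4_adj_iff e ⟨x, hx'⟩ (e.symm j)).mpr (by rw [e.apply_symm_apply]; exact hj)

lemma p4_no_triangle (hT : IsInducedP4 S T) :
    ∀ x ∈ T, ∀ y ∈ T, ∀ z ∈ T, x ≠ y → x ≠ z → y ≠ z →
      ¬(S.Adj x y ∧ S.Adj y z ∧ S.Adj x z) := by
  obtain ⟨-, ⟨e⟩⟩ := hT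
  intro x hx y hy z hz hxy hxz hyz
  have fact : ∀ i j k : Fin 4, i ≠ j → i ≠ k → j ≠ k →
      ¬((pathGraph 4).Adj i j ∧ (pathGraph 4).Adj j k ∧ (pathGraph 4).Adj i k) := by
    simp only [pathGraph_adj]; decide
  have hx' : x ∈ (T : Set V) := hx
  have hy' : y ∈ (T : Set V) := hy
  have hz' : z ∈ (T : Set V) := hz
  have inj : ∀ (a b : (T : Set V)), (a : V) ≠ (b : V) → e a ≠ e b := by
    intro a b h he
    exact h (congrArg Subtype.val (e.injective he))
  rw [p4_adj_iff e ⟨x, hx'⟩ ⟨y, hy'⟩, p4_adj_iff e ⟨y, hy'⟩ ⟨z, hz'⟩,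
    p4_adj_iff e ⟨x, hx'⟩ ⟨z, hz'⟩]
  exact fact _ _ _ (inj _ _ hxy) (inj _ _ hxz) (inj _ _ hyz)

lemma p4_no_indep3 (hT : IsInducedP4 S T) :
    ∀ x ∈ T, ∀ y ∈ T, ∀ z ∈ T, x ≠ y → x ≠ z → y ≠ z →
      S.Adj x y ∨ S.Adj y z ∨ S.Adj x z := by
  obtain ⟨-, ⟨e⟩⟩ := hT
  intro x hx y hy z hz hxy hxz hyz
  have fact : ∀ i j k : Fin 4, i ≠ j → i ≠ k → j ≠ k →
      ((pathGraph 4).Adj i j ∨ (pathGraph 4).Adj j k ∨ (pathGraph 4).Adj i k) := by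
    simp only [pathGraph_adj]; decide
  have hx' : x ∈ (T : Set V) := hx
  have hy' : y ∈ (T : Set V) := hy
  have hz' : z ∈ (T : Set V) := hz
  have inj : ∀ (a b : (T : Set V)), (a : V) ≠ (b : V) → e a ≠ e b := by
    intro a b h he
    exact h (congrArg Subtype.val (e.injective he))
  rw [p4_adj_iff e ⟨x, hx'⟩ ⟨y, hy'⟩, p4_adj_iff e ⟨y, hy'⟩ ⟨z, hz'⟩,
    p4_adj_iff e ⟨x, hx'⟩ ⟨z, hz'⟩]
  exact fact _ _ _ (inj _ _ hxy) (inj _ _ hxz) (inj _ _ hyz)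

end facts

lemma p4_classify {V : Type*} [DecidableEq V] [Fintype V] {S : SimpleGraph V} {K I : Finset V}
    (hpart : K ∪ I = Finset.univ)
    (hK : S.IsClique (K : Set V))
    (hIind : ∀ x ∈ I, ∀ y ∈ I, x ≠ y → ¬S.Adj x y)
    {u v : V} (hu : u ∈ I) (hv : v ∈ I) (huv : u ≠ v)
    {T : Finset V} (hT : IsInducedP4 S T) (huT : u ∈ T) (hvT : v ∈ T) :
    ∃ p q, S.Adj u p ∧ ¬S.Adj v p ∧ S.Adj v q ∧ ¬S.Adj u q := by
  have hnuv : ¬S.Adj u v := hIind u hu v hv huv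
  have hnvu : ¬S.Adj v u := fun h => hnuv h.symm
  -- extract the other two vertices
  have hsub : ({u, v} : Finset V) ⊆ T := by
    intro z hz
    rcases Finset.mem_insert.mp hz with rfl | hz
    · exact huT
    · exact (Finset.mem_singleton.mp hz) ▸ hvT
  have hcuv : ({u, v} : Finset V).card = 2 := by
    rw [Finset.card_insert_of_notMem (by simp [huv]), Finset.card_singleton]
  have hc2 : (T \ {u, v}).card = 2 := by
    rw [Finset.card_sdiff_of_subset hsub, hT.1, hcuv]
  obtain ⟨a, b, hab, habs⟩ := Finset.card_eq_two.mp hc2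
  have haT : a ∈ T := (Finset.mem_sdiff.mp (habs ▸ (Finset.mem_insert_self a {b}))).1
  have hbT : b ∈ T := (Finset.mem_sdiff.mp
    (habs ▸ (Finset.mem_insert_of_mem (Finset.mem_singleton_self b)))).1
  have hauv : a ∉ ({u, v} : Finset V) :=
    (Finset.mem_sdiff.mp (habs ▸ (Finset.mem_insert_self a {b}))).2
  have hbuv : b ∉ ({u, v} : Finset V) :=
    (Finset.mem_sdiff.mp
      (habs ▸ (Finset.mem_insert_of_mem (Finset.mem_singleton_self b)))).2
  have hau : a ≠ u := fun h => hauv (by simp [h])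
  have hav : a ≠ v := fun h => hauv (by simp [h])
  have hbu : b ≠ u := fun h => hbuv (by simp [h])
  have hbv : b ≠ v := fun h => hbuv (by simp [h])
  -- a, b ∈ K
  have hmemK : ∀ z ∈ T, z ≠ u → z ≠ v → z ∈ K := by
    intro z hzT hzu hzv
    have : z ∈ K ∪ I := hpart ▸ Finset.mem_univ z
    rcases Finset.mem_union.mp this with h | hzI
    · exact h
    · exfalso
      have h3 := p4_no_indep3 hT u huT v hvT z hzT huv (Ne.symm hzu) (Ne.symm hzv)
      rcases h3 with h | h | h
      · exact hnuv h
      · exact hIind v hv z hzI (Ne.symm hzv) h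
      · exact hIind u hu z hzI (Ne.symm hzu) h
  have haK : a ∈ K := hmemK a haT hau hav
  have hbK : b ∈ K := hmemK b hbT hbu hbv
  have hadjab : S.Adj a b := hK haK hbK hab
  -- main symmetric argument
  have main : ∀ x y : V, x ∈ T → y ∈ T → x ≠ y → x ≠ u → x ≠ v → y ≠ u → y ≠ v →
      S.Adj x y → S.Adj u x →
      ∃ p q, S.Adj u p ∧ ¬S.Adj v p ∧ S.Adj v q ∧ ¬S.Adj u q := by
    intro x y hxT hyT hxy hxu hxv hyu hyv hadjxy hux
    have hnuy : ¬S.Adj u y := by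
      intro h
      exact p4_no_triangle hT u huT x hxT y hyT (Ne.symm hxu) (Ne.symm hyu) hxy ⟨hux, hadjxy, h⟩
    have hvy : S.Adj v y := by
      by_contra h
      rcases p4_no_indep3 hT u huT v hvT y hyT huv (Ne.symm hyu) (Ne.symm hyv) with
        h' | h' | h'
      · exact hnuv h'
      · exact h h'
      · exact hnuy h'
    have hnvx : ¬S.Adj v x := by
      intro h
      exact p4_no_triangle hT v hvT x hxT y hyT (Ne.symm hxv) (Ne.symm hyv) hxy ⟨h, hadjxy, hvy⟩
    exact ⟨x, y, hux, hnvx, hvy, hnuy⟩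
  -- u has a neighbor in T, which is a or b
  obtain ⟨w, hwT, huw⟩ := p4_exists_adj hT u huT
  have hwv : w ≠ v := fun h => hnuv (h ▸ huw)
  have hwu : w ≠ u := fun h => S.loopless.irrefl u (h ▸ huw)
  have hwab : w = a ∨ w = b := by
    have : w ∈ T \ ({u, v} : Finset V) :=
      Finset.mem_sdiff.mpr ⟨hwT, by simp [hwu, hwv]⟩
    rw [habs] at this
    simpa using this
  rcases hwab with rfl | rfl
  · exact main w b hwT hbT hab hwu hwv hbu hbv hadjab huw
  · exact main w a hwT haT (Ne.symm hab) hwu hwv hau hav hadjab.symm huw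

-- central lemma + main theorem (to be appended after helpers)

lemma mem_K_of_adj {V : Type*} [Fintype V] [DecidableEq V] {S : SimpleGraph V}
    {K I : Finset V} (hpart : K ∪ I = Finset.univ)
    (hIind : ∀ x ∈ I, ∀ y ∈ I, x ≠ y → ¬S.Adj x y)
    {w : V} (hw : w ∈ I) {z : V} (h : S.Adj w z) : z ∈ K := by
  have hz : z ∈ K ∪ I := hpart ▸ Finset.mem_univ z
  rcases Finset.mem_union.mp hz with hzK | hzI
  · exact hzK
  · exact absurd h (hIind w hw z hzI h.ne)

lemma diff_card_one {V : Type*} [Fintype V] [DecidableEq V] (S : SimpleGraph V)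
    [DecidableRel S.Adj] {K I : Finset V}
    (hpart : K ∪ I = Finset.univ) (hK : S.IsClique (K : Set V))
    (hIind : ∀ x ∈ I, ∀ y ∈ I, x ≠ y → ¬S.Adj x y)
    {u v : V} (hu : u ∈ I) (hv : v ∈ I) (huv : u ≠ v)
    (hsig : sigmaP4 S u v = 1) :
    (S.neighborFinset u \ S.neighborFinset v).card = 1 := by
  rw [sigmaP4] at hsig
  obtain ⟨hsing, hne⟩ := Nat.card_eq_one_iff_unique.mp hsig
  obtain ⟨⟨T, hT, huT, hvT⟩⟩ := hne
  obtain ⟨p, q, hup, hnvp, hvq, hnuq⟩ := p4_classify hpart hK hIind hu hv huv hT huT hvT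
  have hnuv : ¬S.Adj u v := hIind u hu v hv huv
  have hnvu : ¬S.Adj v u := fun h => hnuv h.symm
  have hqK : q ∈ K := mem_K_of_adj hpart hIind hv hvq
  have hnuq' : u ≠ q := fun h => hnvu (h ▸ hvq)
  have build : ∀ b, S.Adj u b → ¬S.Adj v b →
      IsInducedP4 S {u, b, q, v} ∧ u ∈ ({u, b, q, v} : Finset V) ∧
        v ∈ ({u, b, q, v} : Finset V) := by
    intro b hub hnvb
    have hbK : b ∈ K := mem_K_of_adj hpart hIind hu hub
    have hbq : b ≠ q := fun h => hnuq (h ▸ hub)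
    have hadjbq : S.Adj b q := hK hbK hqK hbq
    refine ⟨isInducedP4_mk S hub hadjbq hvq.symm hnuq hnuv
      (fun h => hnvb h.symm) hnuq' huv (fun h => hnuv (h ▸ hub)), by simp, by simp⟩
  have huniq : ∀ b, S.Adj u b → ¬S.Adj v b → b = p := by
    intro b hub hnvb
    obtain ⟨h1, h1u, h1v⟩ := build b hub hnvb
    obtain ⟨h2, h2u, h2v⟩ := build p hup hnvp
    have heq := Subsingleton.elim
      (α := {T : Finset V // IsInducedP4 S T ∧ u ∈ T ∧ v ∈ T})
      ⟨{u, b, q, v}, h1, h1u, h1v⟩ ⟨{u, p, q, v}, h2, h2u, h2v⟩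
    have heq' : ({u, b, q, v} : Finset V) = {u, p, q, v} := congrArg Subtype.val heq
    have hb : b ∈ ({u, p, q, v} : Finset V) := heq' ▸ (by simp : b ∈ ({u, b, q, v} : Finset V))
    have hbu : b ≠ u := hub.ne'
    have hbq : b ≠ q := fun h => hnuq (h ▸ hub)
    have hbv : b ≠ v := fun h => hnuv (h ▸ hub)
    simpa [hbu, hbq, hbv] using hb
  have hset : S.neighborFinset u \ S.neighborFinset v = {p} := by
    ext z
    simp only [Finset.mem_sdiff, SimpleGraph.mem_neighborFinset, Finset.mem_singleton]
    constructor
    · rintro ⟨h1, h2⟩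
      exact huniq z h1 h2
    · rintro rfl
      exact ⟨hup, hnvp⟩
  rw [hset, Finset.card_singleton]

theorem stmt16 {V : Type*} [Fintype V] [DecidableEq V] [Nonempty V]
    (S : SimpleGraph V) [DecidableRel S.Adj] (K I : Finset V)
    (hpart : K ∪ I = Finset.univ) (hdisj : Disjoint K I)
    (hK : S.IsClique (K : Set V)) (hI : Sᶜ.IsClique (I : Set V))
    (hcov : I.biUnion (fun v => S.neighborFinset v) = K)
    (hbK : K.card = S.cliqueNum) (hbI : I.card = Sᶜ.cliqueNum)
    (hI2 : 2 ≤ I.card)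
    (hsig : ∀ u ∈ I, ∀ v ∈ I, u ≠ v → sigmaP4 S u v = 1)
    (U : Set V) (hU : U = {x : V | ∀ w : V, w ≠ x → S.Adj x w}) :
    ∃ d : ℕ, (∀ v ∈ I, S.degree v = d) ∧ 1 ≤ d ∧ d ≤ K.card - 1 ∧
      (U.ncard = d - 1 ∨ U.ncard + I.card = d + 1) ∧
      K.card = I.card + U.ncard ∧
      (U.ncard = d - 1 ↔ K.card = I.card + d - 1) ∧
      (U.ncard + I.card = d + 1 ↔ K.card = d + 1) := by
  classical
  set N : V → Finset V := fun u => S.neighborFinset u with hN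
  have hIind : ∀ x ∈ I, ∀ y ∈ I, x ≠ y → ¬S.Adj x y := by
    intro x hx y hy hxy
    have := hI (Finset.mem_coe.mpr hx) (Finset.mem_coe.mpr hy) hxy
    rw [SimpleGraph.compl_adj] at this
    exact this.2
  have hdiff : ∀ u ∈ I, ∀ v ∈ I, u ≠ v → (N u \ N v).card = 1 := by
    intro u hu v hv huv
    exact diff_card_one S hpart hK hIind hu hv huv (hsig u hu v hv huv)
  obtain ⟨u0, hu0⟩ : I.Nonempty := Finset.card_pos.mp (by omega)
  set d : ℕ := (N u0).card with hd
  have hNd : ∀ u ∈ I, (N u).card = d := by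
    intro u hu
    by_cases h : u = u0
    · rw [h]
    · exact card_eq_of_diffs (hdiff u hu u0 hu0 h) (hdiff u0 hu0 u hu (Ne.symm h))
  have hdeg : ∀ v ∈ I, S.degree v = d := by
    intro v hv
    rw [← SimpleGraph.card_neighborFinset_eq_degree]
    exact hNd v hv
  have hNK : ∀ u ∈ I, N u ⊆ K := by
    intro u hu z hz
    exact mem_K_of_adj hpart hIind hu ((SimpleGraph.mem_neighborFinset _ _ _).mp hz)
  -- d ≥ 1
  have hKnum : 1 ≤ S.cliqueNum := by
    obtain ⟨x⟩ := ‹Nonempty V›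
    have hcl : S.IsClique (↑({x} : Finset V) : Set V) := by simp
    have := @SimpleGraph.IsClique.card_le_cliqueNum V S _ {x} hcl
    simpa using this
  have hKne : K.Nonempty := Finset.card_pos.mp (by omega)
  have hd1 : 1 ≤ d := by
    obtain ⟨k, hk⟩ := hKne
    rw [← hcov] at hk
    obtain ⟨u, hu, hku⟩ := Finset.mem_biUnion.mp hk
    have : 0 < (N u).card := Finset.card_pos.mpr ⟨k, hku⟩
    rw [hNd u hu] at this
    omega
  -- d ≤ K.card - 1
  have hu0K : u0 ∉ K := Finset.disjoint_right.mp hdisj hu0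
  have hdK : d ≤ K.card - 1 := by
    have hsubK := hNK u0 hu0
    have hne : N u0 ≠ K := by
      intro h
      have hclique : S.IsClique (↑(insert u0 K) : Set V) := by
        have hadj : ∀ z ∈ K, S.Adj u0 z := by
          intro z hz
          exact (SimpleGraph.mem_neighborFinset _ _ _).mp (show z ∈ N u0 by rw [h]; exact hz)
        intro x hx y hy hxy
        simp only [Finset.coe_insert, Set.mem_insert_iff, Finset.mem_coe] at hx hy
        rcases hx with rfl | hx <;> rcases hy with rfl | hy
        · exact absurd rfl hxy
        · exact hadj y hy
        · exact (hadj x hx).symm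
        · exact hK hx hy hxy
      have hcard := @SimpleGraph.IsClique.card_le_cliqueNum V S _ (insert u0 K) hclique
      rw [Finset.card_insert_of_notMem hu0K] at hcard
      omega
    have hlt := Finset.card_lt_card (ssubset_of_subset_of_ne hsubK hne)
    omega
  -- universal vertices
  set Ufin : Finset V := Finset.univ.filter (fun x => ∀ u ∈ I, x ∈ N u) with hUfin
  have hUU : U = ↑Ufin := by
    rw [hU]
    ext x
    simp only [hUfin, Set.mem_setOf_eq, Finset.coe_filter, Finset.mem_univ, true_and]
    constructor
    · intro hx u hu
      have hux : u ≠ x := by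
        rintro rfl
        obtain ⟨a, ha, b, hb, hab⟩ := Finset.one_lt_card.mp hI2
        by_cases hax : a = u
        · subst hax
          exact hIind a ha b hb hab (hx b (fun h => hab h.symm))
        · exact hIind u hu a ha (fun h => hax h.symm) (hx a hax)
      exact (SimpleGraph.mem_neighborFinset _ _ _).mpr (hx u hux).symm
    · intro hx w hwx
      have hxK : x ∈ K := hNK u0 hu0 (hx u0 hu0)
      have hw : w ∈ K ∪ I := hpart ▸ Finset.mem_univ w
      rcases Finset.mem_union.mp hw with hwK | hwI
      · exact hK hxK hwK (Ne.symm hwx)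
      · exact ((SimpleGraph.mem_neighborFinset _ _ _).mp (hx w hwI)).symm
  have hUcard : U.ncard = Ufin.card := by rw [hUU, Set.ncard_coe_finset]
  obtain ⟨a0, ha0, b0, hb0, hab0⟩ := Finset.one_lt_card.mp hI2
  have hNne : ∀ u ∈ I, ∀ v ∈ I, u ≠ v → N u ≠ N v := by
    intro u hu v hv h heq
    have := hdiff u hu v hv h
    rw [heq, Finset.sdiff_self] at this
    simp at this
  rcases star_or_costar I N hI2 hdiff with ⟨C, hC⟩ | ⟨W, hW⟩
  · -- star case
    obtain ⟨xa, hxaC, hNa0⟩ := hC a0 ha0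
    obtain ⟨xb, hxbC, hNb0⟩ := hC b0 hb0
    have hxab : xa ≠ xb := fun h => hNne a0 ha0 b0 hb0 hab0 (by rw [hNa0, hNb0, h])
    have hUfinC : Ufin = C := by
      ext z
      simp only [hUfin, Finset.mem_filter, Finset.mem_univ, true_and]
      constructor
      · intro hz
        have h1 := hz a0 ha0
        have h2 := hz b0 hb0
        rw [hNa0] at h1
        rw [hNb0] at h2
        rcases Finset.mem_insert.mp h1 with rfl | h1
        · rcases Finset.mem_insert.mp h2 with h3 | h3
          · exact absurd h3 hxab
          · exact h3
        · exact h1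
      · intro hz u hu
        obtain ⟨x, hxC, hNu⟩ := hC u hu
        rw [hNu]
        exact Finset.mem_insert_of_mem hz
    have hCsubK : C ⊆ K := by
      intro z hz
      apply hNK a0 ha0
      rw [hNa0]
      exact Finset.mem_insert_of_mem hz
    have hone : ∀ u ∈ I, (N u \ C).card = 1 := by
      intro u hu
      obtain ⟨x, hxC, hNu⟩ := hC u hu
      have : N u \ C = {x} := by
        rw [hNu]; ext z
        simp only [Finset.mem_sdiff, Finset.mem_insert, Finset.mem_singleton]
        constructor
        · rintro ⟨h1 | h1, h2⟩
          · exact h1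
          · exact absurd h1 h2
        · rintro rfl
          exact ⟨Or.inl rfl, hxC⟩
      rw [this, Finset.card_singleton]
    have hKdC : K \ C = I.biUnion (fun u => N u \ C) := by
      rw [← hcov]
      ext z
      simp only [Finset.mem_sdiff, Finset.mem_biUnion]
      constructor
      · rintro ⟨⟨u, hu, hzu⟩, h2⟩
        exact ⟨u, hu, hzu, h2⟩
      · rintro ⟨u, hu, hzu, h2⟩
        exact ⟨⟨u, hu, hzu⟩, h2⟩
    have hdisjP : ∀ u ∈ I, ∀ v ∈ I, u ≠ v → Disjoint (N u \ C) (N v \ C) := by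
      intro u hu v hv huv
      obtain ⟨x, hxC, hNu⟩ := hC u hu
      obtain ⟨y, hyC, hNv⟩ := hC v hv
      have hxy : x ≠ y := fun h => hNne u hu v hv huv (by rw [hNu, hNv, h])
      rw [Finset.disjoint_left]
      intro z hz1 hz2
      rw [hNu] at hz1
      rw [hNv] at hz2
      rcases Finset.mem_insert.mp (Finset.mem_sdiff.mp hz1).1 with rfl | h
      · rcases Finset.mem_insert.mp (Finset.mem_sdiff.mp hz2).1 with h' | h'
        · exact hxy h'
        · exact (Finset.mem_sdiff.mp hz2).2 h'
      · exact (Finset.mem_sdiff.mp hz1).2 h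
    have hKCcard : (K \ C).card = I.card := by
      rw [hKdC, Finset.card_biUnion hdisjP]
      rw [Finset.sum_congr rfl hone, Finset.sum_const, smul_eq_mul, mul_one]
    have hKcard : K.card = I.card + C.card := by
      have := Finset.card_sdiff_add_card_eq_card hCsubK
      omega
    have hdC : d = C.card + 1 := by
      rw [← hNd a0 ha0, hNa0, Finset.card_insert_of_notMem hxaC]
    refine ⟨d, hdeg, hd1, hdK, ?_, ?_, ?_, ?_⟩ <;> rw [hUcard, hUfinC] <;> omega
  · -- costar case
    obtain ⟨ya, hyaW, hNa0⟩ := hW a0 ha0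
    obtain ⟨yb, hybW, hNb0⟩ := hW b0 hb0
    have hyab : ya ≠ yb := fun h => hNne a0 ha0 b0 hb0 hab0 (by rw [hNa0, hNb0, h])
    have hKW : K = W := by
      apply Finset.Subset.antisymm
      · rw [← hcov]
        intro z hz
        obtain ⟨u, hu, hzu⟩ := Finset.mem_biUnion.mp hz
        obtain ⟨y, hyW, hNu⟩ := hW u hu
        rw [hNu] at hzu
        exact Finset.mem_of_mem_erase hzu
      · intro z hzW
        rw [← hcov]
        by_cases hz : z = ya
        · subst hz
          refine Finset.mem_biUnion.mpr ⟨b0, hb0, ?_⟩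
          rw [hNb0]
          exact Finset.mem_erase.mpr ⟨hyab, hzW⟩
        · refine Finset.mem_biUnion.mpr ⟨a0, ha0, ?_⟩
          rw [hNa0]
          exact Finset.mem_erase.mpr ⟨hz, hzW⟩
    have hWcard : W.card = d + 1 := by
      have h1 : d = W.card - 1 := by
        rw [← hNd a0 ha0, hNa0, Finset.card_erase_of_mem hyaW]
      have h2 : 0 < W.card := Finset.card_pos.mpr ⟨ya, hyaW⟩
      omega
    have hUsubK : Ufin ⊆ K := by
      intro z hz
      simp only [hUfin, Finset.mem_filter, Finset.mem_univ, true_and] at hz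
      exact hNK a0 ha0 (hz a0 ha0)
    have hone : ∀ u ∈ I, (K \ N u).card = 1 := by
      intro u hu
      obtain ⟨y, hyW, hNu⟩ := hW u hu
      have : K \ N u = {y} := by
        rw [hKW, hNu]
        ext z
        simp only [Finset.mem_sdiff, Finset.mem_erase, Finset.mem_singleton]
        constructor
        · rintro ⟨h1, h2⟩
          by_contra h
          exact h2 ⟨h, h1⟩
        · rintro rfl
          exact ⟨hyW, fun h => h.1 rfl⟩
      rw [this, Finset.card_singleton]
    have hdisjP : ∀ u ∈ I, ∀ v ∈ I, u ≠ v → Disjoint (K \ N u) (K \ N v) := by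
      intro u hu v hv huv
      obtain ⟨y, hyW, hNu⟩ := hW u hu
      obtain ⟨y', hyW', hNv⟩ := hW v hv
      have hyy : y ≠ y' := fun h => hNne u hu v hv huv (by rw [hNu, hNv, h])
      rw [Finset.disjoint_left]
      intro z hz1 hz2
      rw [hKW, hNu] at hz1
      rw [hKW, hNv] at hz2
      have h1 : z = y := by
        have := (Finset.mem_sdiff.mp hz1)
        by_contra h
        exact this.2 (Finset.mem_erase.mpr ⟨h, this.1⟩)
      have h2 : z = y' := by
        have := (Finset.mem_sdiff.mp hz2)
        by_contra h
        exact this.2 (Finset.mem_erase.mpr ⟨h, this.1⟩)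
      exact hyy (h1 ▸ h2)
    have hKUeq : K \ Ufin = I.biUnion (fun u => K \ N u) := by
      ext z
      simp only [Finset.mem_sdiff, hUfin, Finset.mem_filter, Finset.mem_univ, true_and,
        Finset.mem_biUnion]
      constructor
      · rintro ⟨hzK, h⟩
        push_neg at h
        obtain ⟨u, hu, hn⟩ := h
        exact ⟨u, hu, hzK, hn⟩
      · rintro ⟨u, hu, hzK, hn⟩
        exact ⟨hzK, fun hall => hn (hall u hu)⟩
    have hKUcard : (K \ Ufin).card = I.card := by
      rw [hKUeq, Finset.card_biUnion hdisjP]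
      rw [Finset.sum_congr rfl hone, Finset.sum_const, smul_eq_mul, mul_one]
    have hKcard : Ufin.card + I.card = K.card := by
      have := Finset.card_sdiff_add_card_eq_card hUsubK
      omega
    have hKd : K.card = d + 1 := by rw [hKW, hWcard]
    refine ⟨d, hdeg, hd1, hdK, ?_, ?_, ?_, ?_⟩ <;> rw [hUcard] <;> omega
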